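/- Let t, r, m be natural numbers with r + t ≤ m, and write γ = r/m and γ̃ = γ·(1 + t/(m-t)). Then binom(m-t, ≤ r) ≥ (1-γ̃)^t · binom(m, ≤ r). -/

import Mathlib

open Finset

abbrev Cube (m : ℕ) := Fin m → ZMod 2
abbrev BF (m : ℕ) := Cube m → ZMod 2

/-- Codewords of RM(m,r): functions computed by a polynomial of total degree ≤ r. -/
def RM (m r : ℕ) : Set (BF m) :=
  {f | ∃ p : MvPolynomial (Fin m) (ZMod 2), p.totalDegree ≤ r ∧
    ∀ x, MvPolynomial.eval x p = f x}

/-- Normalized weight of a Boolean function. -/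
noncomputable def wt {m : ℕ} (f : BF m) : ℝ :=
  ((univ.filter fun x => f x = 1).card : ℝ) / 2 ^ m

/-- Bias of a Boolean function. -/
noncomputable def bias {m : ℕ} (f : BF m) : ℝ :=
  (∑ x : Cube m, if f x = 0 then (1 : ℝ) else -1) / 2 ^ m

/-- Number of codewords of RM(m,r) of weight at most β. -/
noncomputable def W (m r : ℕ) (β : ℝ) : ℕ :=
  Set.ncard {f : BF m | f ∈ RM m r ∧ wt f ≤ β}

/-- binom(n, ≤ k) = ∑_{i=0}^k C(n,i). -/
def binomLe (n k : ℕ) : ℕ := ∑ i ∈ Finset.range (k + 1), n.choose i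

/-- binom(m-t, ≤ r) ≥ (1-γ̃)^t · binom(m, ≤ r) where γ̃ =
(r/m)·(1 + t/(m-t)) (Lemma `(Simple Combinatorial Bound III)`). -/


lemma binomLe_step (n r : ℕ) (h : r < n) :
    ((1:ℝ) - r / n) * binomLe n r ≤ binomLe (n - 1) r := by
  have hn0 : 0 < n := Nat.lt_of_le_of_lt (Nat.zero_le r) h
  have hn : (0:ℝ) < n := by exact_mod_cast hn0
  unfold binomLe
  push_cast
  rw [Finset.mul_sum]
  apply Finset.sum_le_sum
  intro i hi
  have hir : i ≤ r := Nat.lt_succ_iff.mp (Finset.mem_range.mp hi)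
  have hin : i ≤ n := le_of_lt (lt_of_le_of_lt hir h)
  have key : ((n - 1).choose i : ℝ) * n = n.choose i * ((n:ℝ) - i) := by
    have := Nat.choose_mul_succ_eq (n - 1) i
    rw [Nat.sub_add_cancel hn0] at this
    have : ((n-1).choose i * n : ℕ) = (n.choose i * (n - i) : ℕ) := this
    push_cast [Nat.cast_sub hin] at this
    exact_mod_cast this
  have h1 : (1:ℝ) - r / n ≤ ((n:ℝ) - i) / n := by
    rw [sub_div, div_self hn.ne']
    gcongr
  calc ((1:ℝ) - r / n) * n.choose i ≤ (((n:ℝ) - i) / n) * n.choose i := by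
        apply mul_le_mul_of_nonneg_right h1 (by positivity)
    _ = ((n - 1).choose i : ℝ) := by
        field_simp
        linarith [key]

lemma binomLe_chain (m r t : ℕ) (h : r + t ≤ m) (hm : t < m) :
    ∀ s ≤ t, ((1:ℝ) - r / ((m:ℝ) - t)) ^ s * binomLe m r ≤ binomLe (m - s) r := by
  have hmt : (0:ℝ) < (m:ℝ) - t := by
    have : (t:ℝ) < m := by exact_mod_cast hm
    linarith
  have hrm : (r:ℝ) ≤ (m:ℝ) - t := by
    have : r ≤ m - t := Nat.le_sub_of_add_le h
    have h2 : (r:ℝ) ≤ ((m - t : ℕ) : ℝ) := by exact_mod_cast this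
    rwa [Nat.cast_sub hm.le] at h2
  have hc0 : (0:ℝ) ≤ 1 - r / ((m:ℝ) - t) := by
    rw [sub_nonneg, div_le_one hmt]; exact hrm
  intro s hs
  induction s with
  | zero => simp
  | succ s ih =>
    have hs' : s ≤ t := Nat.le_of_succ_le hs
    have hrs : r < m - s := by omega
    have hstep := binomLe_step (m - s) r hrs
    have hmono : (1:ℝ) - r / ((m:ℝ) - t) ≤ 1 - r / ((m - s : ℕ) : ℝ) := by
      gcongr
      rw [Nat.cast_sub (show s ≤ m by omega)]
      have : (s:ℝ) ≤ t := by exact_mod_cast hs'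
      linarith
    have h1 : ((1:ℝ) - r / ((m:ℝ) - t)) ^ (s+1) * binomLe m r
        ≤ ((1:ℝ) - r / ((m:ℝ) - t)) * binomLe (m - s) r := by
      rw [pow_succ, mul_comm (_ ^ s) _, mul_assoc]
      exact mul_le_mul_of_nonneg_left (ih hs') hc0
    have h2 : ((1:ℝ) - r / ((m:ℝ) - t)) * binomLe (m - s) r
        ≤ ((1:ℝ) - r / ((m - s : ℕ) : ℝ)) * binomLe (m - s) r :=
      mul_le_mul_of_nonneg_right hmono (by positivity)
    have : m - (s + 1) = (m - s) - 1 := by omega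
    rw [this]
    exact h1.trans (h2.trans hstep)

theorem binomLe_lower_bound (t r m : ℕ) (h : r + t ≤ m) :
    (1 - ((r : ℝ) / m) * (1 + (t : ℝ) / ((m : ℝ) - t))) ^ t * (binomLe m r : ℝ) ≤
      (binomLe (m - t) r : ℝ) := by
  rcases Nat.eq_zero_or_pos r with hr | hr
  · subst hr; simp [binomLe]
  · have hm : t < m := by omega
    have hmt : (0:ℝ) < (m:ℝ) - t := by
      have : (t:ℝ) < m := by exact_mod_cast hm
      linarith
    have hm0 : (0:ℝ) < m := by
      have : 0 < m := by omega
      exact_mod_cast this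
    have heq : ((r:ℝ)/m) * (1 + (t:ℝ)/((m:ℝ) - t)) = (r:ℝ)/((m:ℝ) - t) := by
      field_simp
      ring
    rw [heq]
    exact binomLe_chain m r t h hm t le_rfl
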